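/- Suppose Q is a convex quadrilateral that is both tangential (there exists a circle inscribed in Q) and a midpoint diagonal quadrilateral. Then Q is orthodiagonal, i.e., the two diagonals of Q are perpendicular. -/

import Mathlib

open scoped RealInnerProductSpace

noncomputable section

abbrev Pt : Type := EuclideanSpace ℝ (Fin 2)

/-- A convex quadrilateral with vertices listed in cyclic order: each vertex lies
outside the convex hull of the other three. -/
def ConvexQuad (P1 P2 P3 P4 : Pt) : Prop :=
  P1 ∉ convexHull ℝ ({P2, P3, P4} : Set Pt) ∧
  P2 ∉ convexHull ℝ ({P1, P3, P4} : Set Pt) ∧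
  P3 ∉ convexHull ℝ ({P1, P2, P4} : Set Pt) ∧
  P4 ∉ convexHull ℝ ({P1, P2, P3} : Set Pt)

/-- A set is inscribed in the quadrilateral with vertices `P1 P2 P3 P4` (in cyclic
order) if it is contained in the quadrilateral and meets each of the four sides in
exactly one point. -/
def InscribedIn (E : Set Pt) (P1 P2 P3 P4 : Pt) : Prop :=
  E ⊆ convexHull ℝ ({P1, P2, P3, P4} : Set Pt) ∧
  (∃ p, E ∩ segment ℝ P1 P2 = {p}) ∧
  (∃ p, E ∩ segment ℝ P2 P3 = {p}) ∧
  (∃ p, E ∩ segment ℝ P3 P4 = {p}) ∧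
  (∃ p, E ∩ segment ℝ P4 P1 = {p})

/-- A midpoint diagonal quadrilateral: a convex quadrilateral in which the diagonals
intersect in a point coinciding with the midpoint of at least one diagonal. -/
def MidpointDiagonalQuad (P1 P2 P3 P4 : Pt) : Prop :=
  ConvexQuad P1 P2 P3 P4 ∧
    (midpoint ℝ P1 P3 ∈ segment ℝ P2 P4 ∨ midpoint ℝ P2 P4 ∈ segment ℝ P1 P3)

/-- A tangential quadrilateral: some circle is inscribed in it. -/
def IsTangential (P1 P2 P3 P4 : Pt) : Prop :=
  ∃ (c : Pt) (r : ℝ), 0 < r ∧ InscribedIn (Metric.sphere c r) P1 P2 P3 P4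

section Aux

open Set

lemma dist_sq_sub' (X A C : Pt) :
    dist X A ^2 - dist X C ^2 = 2*⟪X - midpoint ℝ A C, C - A⟫ := by
  have h : ∀ U V : Pt, dist U V ^ 2 = ⟪U - V, U - V⟫ := fun U V => by
    rw [dist_eq_norm]; exact (real_inner_self_eq_norm_sq _).symm
  rw [h, h, midpoint_eq_smul_add]
  simp only [inner_sub_left, inner_sub_right, inner_add_left, inner_add_right,
    real_inner_smul_left, real_inner_smul_right, invOf_eq_inv,
    real_inner_comm A X, real_inner_comm C X, real_inner_comm C A]
  ring

/-- The key algebraic lemma: if `B` and `D` have equal differences of distances to `A`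
and `C` (Pitot), and the midpoint of `AC` lies strictly inside segment `BD`, then the
diagonals are perpendicular. -/
lemma key_lemma (A B C D : Pt) (hBA : B ≠ A) (hDA : D ≠ A)
    (hPitot : dist B A - dist B C = dist D A - dist D C)
    (hM : midpoint ℝ A C ∈ segment ℝ B D) (hMB : midpoint ℝ A C ≠ B)
    (hMD : midpoint ℝ A C ≠ D) : (⟪C - A, D - B⟫ : ℝ) = 0 := by
  obtain ⟨sb, sd, hsb, hsd, hsum, hMeq⟩ := hM
  have hsd' : 0 < sd := by
    rcases hsd.lt_or_eq with h | h; · exact h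
    exfalso; apply hMB; rw [← hMeq, ← h, show sb = 1 by linarith]; simp
  have hsb' : 0 < sb := by
    rcases hsb.lt_or_eq with h | h; · exact h
    exfalso; apply hMD; rw [← hMeq, ← h, show sd = 1 by linarith]; simp
  set M := midpoint ℝ A C with hMdef
  set β : ℝ := ⟪D - B, C - A⟫ with hβ
  have eB : B - M = sd • (B - D) := by
    rw [← hMeq]; match_scalars <;> simp <;> linarith
  have eD : D - M = sb • (D - B) := by
    rw [← hMeq]; match_scalars <;> simp <;> linarith
  have e2 : dist B A ^2 - dist B C ^2 = -(2*sd*β) := by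
    rw [dist_sq_sub' B A C, eB]
    rw [real_inner_smul_left]
    have : (⟪B - D, C - A⟫ : ℝ) = -β := by
      rw [hβ, ← inner_neg_left]; congr 1; abel
    rw [this]; ring
  have e4 : dist D A ^2 - dist D C ^2 = 2*sb*β := by
    rw [dist_sq_sub' D A C, eD, real_inner_smul_left, ← hβ]; ring
  have hS2 : 0 < dist B A + dist B C := by
    have := dist_pos.2 hBA; have := dist_nonneg (x := B) (y := C); linarith
  have hS4 : 0 < dist D A + dist D C := by
    have := dist_pos.2 hDA; have := dist_nonneg (x := D) (y := C); linarith
  have hβ0 : β = 0 := by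
    by_contra hb
    have h2' : (dist B A + dist B C) * (dist B A - dist B C) = -(2*sd*β) := by
      rw [← e2]; ring
    have h4' : (dist D A + dist D C) * (dist D A - dist D C) = 2*sb*β := by
      rw [← e4]; ring
    have h4'' : (dist D A + dist D C) * (dist B A - dist B C) = 2*sb*β := by
      rw [hPitot]; exact h4'
    have hb2 : 0 < β^2 := by positivity
    have hfin : (dist B A + dist B C) * (dist D A + dist D C) *
        (dist B A - dist B C)^2 = -(4*sb*sd*β^2) := by
      linear_combination ((dist D A + dist D C)*(dist B A - dist B C)) * h2'
        + (-(2*sd*β)) * h4''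
    nlinarith [hfin, mul_nonneg (mul_nonneg hS2.le hS4.le) (sq_nonneg (dist B A - dist B C)),
      mul_pos (mul_pos hsb' hsd') hb2]
  rw [real_inner_comm, ← hβ, hβ0]

/-- A point not in the hull of `T` is an extreme point of the hull of `insert x T`. -/
lemma not_openSegment_of_not_mem_hull {x : Pt} {T : Set Pt} (hT : T.Nonempty)
    (hx : x ∉ convexHull ℝ T) {a b : Pt}
    (ha : a ∈ convexHull ℝ (insert x T)) (hb : b ∈ convexHull ℝ (insert x T))
    (hax : a ≠ x) (hbx : b ≠ x) (hseg : x ∈ openSegment ℝ a b) : False := by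
  rw [convexHull_insert hT, mem_convexJoin] at ha hb
  obtain ⟨x1, hx1, a', ha', haseg⟩ := ha
  obtain ⟨x2, hx2, b', hb', hbseg⟩ := hb
  rw [mem_singleton_iff] at hx1 hx2
  obtain ⟨u1, v1, hu1, hv1, huv1, hA⟩ := haseg
  obtain ⟨u2, v2, hu2, hv2, huv2, hB⟩ := hbseg
  rw [hx1] at hA; rw [hx2] at hB
  clear hx1 hx2
  obtain ⟨l, m, hl, hm, hlm, hX⟩ := hseg
  have ha'x : a' ≠ x := fun h => hx (h ▸ ha')
  have hb'x : b' ≠ x := fun h => hx (h ▸ hb')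
  have hv1' : 0 < v1 := by
    rcases hv1.lt_or_eq with h | h; · exact h
    exfalso; apply hax; rw [← hA, ← h, show u1 = 1 by linarith]; simp
  have hv2' : 0 < v2 := by
    rcases hv2.lt_or_eq with h | h; · exact h
    exfalso; apply hbx; rw [← hB, ← h, show u2 = 1 by linarith]; simp
  set w : ℝ := l*v1 + m*v2 with hw
  have hwpos : 0 < w := by positivity
  have h2 : (l*u1 + m*u2) • x + ((l*v1) • a' + (m*v2) • b') = l • a + m • b := by
    rw [← hA, ← hB]; simp only [smul_add, smul_smul, add_smul]; abel
  rw [hX] at h2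
  have h3 : l*u1 + m*u2 = 1 - w := by
    rw [hw]; linear_combination l*huv1 + m*huv2 + hlm
  rw [h3, sub_smul, one_smul] at h2
  have h4 : (l*v1) • a' + (m*v2) • b' = w • x := by
    rw [eq_sub_of_add_eq' h2]; abel
  have hxeq : x = (w⁻¹*(l*v1)) • a' + (w⁻¹*(m*v2)) • b' := by
    rw [mul_smul w⁻¹ (l*v1) a', mul_smul w⁻¹ (m*v2) b', ← smul_add, h4, smul_smul,
      inv_mul_cancel₀ hwpos.ne', one_smul]
  apply hx
  rw [hxeq]
  exact (convex_convexHull ℝ T) ha' hb'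
    (by positivity) (by positivity) (by field_simp; exact hw.symm)

def IsExtremePt (H : Set Pt) (x : Pt) : Prop :=
  ∀ a b, a ∈ H → b ∈ H → a ≠ x → b ≠ x → x ∉ openSegment ℝ a b

/-- The unique point where a circle meets a side of the quadrilateral is a tangency
point: the side is perpendicular to the radius there. -/
lemma tangency {c : Pt} {r : ℝ} {H : Set Pt}
    (hsub : Metric.sphere c r ⊆ H) {A B p : Pt} (hAB : A ≠ B)
    (hextA : IsExtremePt H A) (hextB : IsExtremePt H B)
    (hAH : A ∈ H) (hBH : B ∈ H)
    (hp : Metric.sphere c r ∩ segment ℝ A B = {p}) :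
    (⟪p - c, B - A⟫ : ℝ) = 0 := by
  have hpmem : p ∈ Metric.sphere c r ∩ segment ℝ A B := by rw [hp]; rfl
  obtain ⟨hps, hpseg⟩ := hpmem
  by_contra hne
  set u : Pt := B - A with hu
  have hune : u ≠ 0 := sub_ne_zero.2 (Ne.symm hAB)
  have hnu : 0 < ‖u‖ := norm_pos_iff.2 hune
  set k : ℝ := ⟪p - c, u⟫ / ‖u‖^2 with hk
  have hkne : k ≠ 0 := div_ne_zero hne (by positivity)
  have hkinner : (⟪p - c, u⟫ : ℝ) = k * ‖u‖^2 := by rw [hk]; field_simp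
  set p' : Pt := p - (2*k) • u with hp'
  have hp's : p' ∈ Metric.sphere c r := by
    rw [Metric.mem_sphere, dist_eq_norm] at hps ⊢
    have h1 : p' - c = (p - c) - (2*k) • u := by rw [hp']; abel
    have h3 : ‖(2*k) • u‖^2 = (2*k)^2 * ‖u‖^2 := by
      rw [norm_smul, mul_pow, Real.norm_eq_abs, sq_abs]
    have h2 : ‖p' - c‖^2 = ‖p - c‖^2 := by
      rw [h1, norm_sub_sq_real, real_inner_smul_right, hkinner, h3]; ring
    have h4 := congrArg Real.sqrt h2
    rwa [Real.sqrt_sq (norm_nonneg _), Real.sqrt_sq (norm_nonneg _), hps] at h4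
  have hp'nep : p' ≠ p := by
    intro h
    rw [hp'] at h
    have h5 : (2*k) • u = 0 := by
      have := congrArg (fun z => p - z) h
      simpa using this
    rcases smul_eq_zero.1 h5 with h6 | h6
    · exact hkne (by linarith)
    · exact hune h6
  obtain ⟨ta, tb, h0a, h0b, hab, heq⟩ := hpseg
  have hpA : p = A + tb • u := by rw [← heq, hu]; match_scalars <;> linarith
  set t' : ℝ := tb - 2*k with ht'def
  have hp'A : p' = A + t' • u := by rw [hp', hpA, ht'def]; module
  have hBA : B = A + (1:ℝ) • u := by rw [hu]; module
  have hsegmem : ∀ s : ℝ, 0 ≤ s → s ≤ 1 → A + s • u ∈ segment ℝ A B :=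
    fun s hs0 hs1 => ⟨1-s, s, by linarith, hs0, by ring, by rw [hBA]; module⟩
  have hp'ns : p' ∉ segment ℝ A B := by
    intro hmem
    have h7 : p' ∈ ({p} : Set Pt) := by rw [← hp]; exact ⟨hp's, hmem⟩
    exact hp'nep (mem_singleton_iff.1 h7)
  have hp'A' : p' ≠ A := fun h => hp'ns (h ▸ left_mem_segment ℝ A B)
  have hp'B' : p' ≠ B := fun h => hp'ns (h ▸ right_mem_segment ℝ A B)
  have ht' : t' < 0 ∨ 1 < t' := by
    by_contra hcon
    push_neg at hcon
    exact hp'ns (hp'A ▸ hsegmem t' hcon.1 hcon.2)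
  clear_value t' k p' u
  rcases ht' with hcase | hcase
  · have hd : (1:ℝ) - t' ≠ 0 := by linarith
    refine hextA p' B (hsub hp's) hBH hp'A' (Ne.symm hAB)
      ⟨1 - (-t')/(1-t'), (-t')/(1-t'), ?_, by apply div_pos <;> linarith, by ring, ?_⟩
    · rw [sub_pos, div_lt_one (by linarith)]; linarith
    · rw [hp'A, hBA]
      match_scalars <;> (field_simp; try ring)
  · have hd : t' ≠ 0 := by linarith
    refine hextB A p' hAH (hsub hp's) hAB hp'B'
      ⟨1 - 1/t', 1/t', ?_, by positivity, by ring, ?_⟩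
    · rw [sub_pos, div_lt_one (by linarith)]; linarith
    · rw [hp'A, hBA]
      match_scalars <;> (field_simp; try ring)

/-- Pythagoras: the tangent length from a vertex. -/
lemma tangent_length {c A B p : Pt} {r : ℝ} (hps : p ∈ Metric.sphere c r)
    (hpseg : p ∈ segment ℝ A B) (htan : (⟪p - c, B - A⟫ : ℝ) = 0) :
    dist A p ^ 2 = dist A c ^ 2 - r ^ 2 := by
  obtain ⟨ta, tb, h0a, h0b, hab, heq⟩ := hpseg
  have hAp : A - p = tb • (A - B) := by rw [← heq]; match_scalars <;> linarith
  have hinner : (⟪A - p, p - c⟫ : ℝ) = 0 := by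
    rw [hAp, real_inner_smul_left]
    have h1 : (⟪A - B, p - c⟫ : ℝ) = 0 := by
      rw [← neg_sub B A, inner_neg_left, real_inner_comm, htan, neg_zero]
    rw [h1, mul_zero]
  have hsplit : A - c = (A - p) + (p - c) := by abel
  have hpc : ‖p - c‖ = r := by
    rw [← dist_eq_norm]; exact Metric.mem_sphere.1 hps
  have hn := norm_add_sq_real (A - p) (p - c)
  rw [← hsplit, hinner, hpc] at hn
  rw [dist_eq_norm, dist_eq_norm, hn]; ring

end Aux

section Main

open Set

set_option maxHeartbeats 1000000 in
/-- A tangential midpoint diagonal quadrilateral is orthodiagonal. -/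
theorem tangential_midpoint_diagonal_is_orthodiagonal (P1 P2 P3 P4 : Pt)
    (hQ : MidpointDiagonalQuad P1 P2 P3 P4) (hT : IsTangential P1 P2 P3 P4) :
    (inner ℝ (P3 - P1) (P4 - P2) : ℝ) = 0 := by
  obtain ⟨hconv, hmid⟩ := hQ
  obtain ⟨c, r, hr, hsub, h12, h23, h34, h41⟩ := hT
  obtain ⟨h1c, h2c, h3c, h4c⟩ := hconv
  set H : Set Pt := convexHull ℝ ({P1, P2, P3, P4} : Set Pt) with hH
  -- vertices are pairwise distinct where needed
  have hne : ∀ {X Y : Pt} {U : Set Pt}, X ∉ convexHull ℝ U → Y ∈ U → X ≠ Y :=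
    fun {X Y U} hX hY h => hX (h ▸ subset_convexHull ℝ U hY)
  have h12ne : P1 ≠ P2 := hne h1c (by simp)
  have h23ne : P2 ≠ P3 := hne h2c (by simp)
  have h34ne : P3 ≠ P4 := hne h3c (by simp)
  have h41ne : P4 ≠ P1 := hne h4c (by simp)
  -- extreme points
  have hextgen : ∀ (x : Pt) (T : Set Pt), ({P1, P2, P3, P4} : Set Pt) = insert x T →
      T.Nonempty → x ∉ convexHull ℝ T → IsExtremePt H x := by
    intro x T hT hTne hx a b ha hb hax hbx hseg
    rw [hH, hT] at ha hb
    exact not_openSegment_of_not_mem_hull hTne hx ha hb hax hbx hseg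
  have he1 : ({P1, P2, P3, P4} : Set Pt) = insert P1 {P2, P3, P4} := rfl
  have he2 : ({P1, P2, P3, P4} : Set Pt) = insert P2 {P1, P3, P4} := by
    ext y; simp; tauto
  have he3 : ({P1, P2, P3, P4} : Set Pt) = insert P3 {P1, P2, P4} := by
    ext y; simp; tauto
  have he4 : ({P1, P2, P3, P4} : Set Pt) = insert P4 {P1, P2, P3} := by
    ext y; simp; tauto
  have hext1 : IsExtremePt H P1 := hextgen P1 _ he1 ⟨P2, by simp⟩ h1c
  have hext2 : IsExtremePt H P2 := hextgen P2 _ he2 ⟨P1, by simp⟩ h2c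
  have hext3 : IsExtremePt H P3 := hextgen P3 _ he3 ⟨P1, by simp⟩ h3c
  have hext4 : IsExtremePt H P4 := hextgen P4 _ he4 ⟨P1, by simp⟩ h4c
  have hm1 : P1 ∈ H := subset_convexHull ℝ _ (by simp)
  have hm2 : P2 ∈ H := subset_convexHull ℝ _ (by simp)
  have hm3 : P3 ∈ H := subset_convexHull ℝ _ (by simp)
  have hm4 : P4 ∈ H := subset_convexHull ℝ _ (by simp)
  -- tangent length function
  set f : Pt → ℝ := fun X => Real.sqrt (dist X c ^ 2 - r ^ 2) with hf
  have hside : ∀ A B : Pt, A ≠ B → IsExtremePt H A → IsExtremePt H B → A ∈ H → B ∈ H →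
      (∃ p, Metric.sphere c r ∩ segment ℝ A B = {p}) → dist A B = f A + f B := by
    rintro A B hAB hEA hEB hA hB ⟨p, hp⟩
    have htan := tangency hsub hAB hEA hEB hA hB hp
    have hpmem : p ∈ Metric.sphere c r ∩ segment ℝ A B := by rw [hp]; rfl
    obtain ⟨hps, hpseg⟩ := hpmem
    have hA2 : dist A p ^ 2 = dist A c ^ 2 - r ^ 2 := tangent_length hps hpseg htan
    have hpseg' : p ∈ segment ℝ B A := by rw [segment_symm]; exact hpseg
    have htan' : (⟪p - c, A - B⟫ : ℝ) = 0 := by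
      rw [← neg_sub B A, inner_neg_right, htan, neg_zero]
    have hB2 : dist B p ^ 2 = dist B c ^ 2 - r ^ 2 := tangent_length hps hpseg' htan'
    have hfA : dist A p = f A := by
      show dist A p = Real.sqrt (dist A c ^ 2 - r ^ 2)
      rw [← hA2, Real.sqrt_sq dist_nonneg]
    have hfB : dist B p = f B := by
      show dist B p = Real.sqrt (dist B c ^ 2 - r ^ 2)
      rw [← hB2, Real.sqrt_sq dist_nonneg]
    have hwb := (mem_segment_iff_wbtw.1 hpseg).dist_add_dist
    rw [← hwb, hfA, dist_comm p B, hfB]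
  have hs12 : dist P1 P2 = f P1 + f P2 := hside P1 P2 h12ne hext1 hext2 hm1 hm2 h12
  have hs23 : dist P2 P3 = f P2 + f P3 := hside P2 P3 h23ne hext2 hext3 hm2 hm3 h23
  have hs34 : dist P3 P4 = f P3 + f P4 := hside P3 P4 h34ne hext3 hext4 hm3 hm4 h34
  have hs41 : dist P4 P1 = f P4 + f P1 := hside P4 P1 h41ne hext4 hext1 hm4 hm1 h41
  -- midpoints differ from the other two vertices
  have hmidne : ∀ (X Y W : Pt) (U : Set Pt), X ∈ U → Y ∈ U →
      W ∉ convexHull ℝ U → midpoint ℝ X Y ≠ W := by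
    intro X Y W U hX hY hW h
    apply hW
    rw [← h]
    exact (convex_convexHull ℝ U).segment_subset (subset_convexHull ℝ U hX)
      (subset_convexHull ℝ U hY) (midpoint_mem_segment X Y)
  rcases hmid with hM | hM
  · have hMB : midpoint ℝ P1 P3 ≠ P2 := hmidne P1 P3 P2 {P1, P3, P4} (by simp) (by simp) h2c
    have hMD : midpoint ℝ P1 P3 ≠ P4 := hmidne P1 P3 P4 {P1, P2, P3} (by simp) (by simp) h4c
    have hPitot : dist P2 P1 - dist P2 P3 = dist P4 P1 - dist P4 P3 := by
      rw [dist_comm P2 P1, dist_comm P4 P3]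
      rw [hs12, hs23, hs34, hs41]; ring
    exact key_lemma P1 P2 P3 P4 h12ne.symm h41ne hPitot hM hMB hMD
  · have hMB : midpoint ℝ P2 P4 ≠ P1 := hmidne P2 P4 P1 {P2, P3, P4} (by simp) (by simp) h1c
    have hMD : midpoint ℝ P2 P4 ≠ P3 := hmidne P2 P4 P3 {P1, P2, P4} (by simp) (by simp) h3c
    have hPitot : dist P1 P2 - dist P1 P4 = dist P3 P2 - dist P3 P4 := by
      rw [dist_comm P1 P4, dist_comm P3 P2]
      rw [hs12, hs23, hs34, hs41]; ring
    have := key_lemma P2 P1 P4 P3 h12ne h23ne.symm hPitot hM hMB hMD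
    rw [real_inner_comm]
    exact this

end Main

end
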